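/- If a real $n \times n$ matrix $A$ is not $\mathcal{L}^n_+$-nonnegative (i.e. $A(\mathcal{L}^n_+) \not\subseteq \mathcal{L}^n_+$), then there exists an $\mathcal{L}^n_+$-semipositive matrix $B$ such that $A + B$ is not $\mathcal{L}^n_+$-semipositive. -/

import Mathlib

open Matrix Set

/-- The Lorentz (ice-cream) cone in `ℝ^(n+1)`:
`{x : xₙ ≥ 0, xₙ² - ∑_{i<n} xᵢ² ≥ 0}`, the last coordinate playing the role
of `xₙ`. -/
def lorentzCone (n : ℕ) : Set (Fin (n + 1) → ℝ) :=
  {x | 0 ≤ x (Fin.last n) ∧ ∑ i : Fin n, (x i.castSucc) ^ 2 ≤ (x (Fin.last n)) ^ 2}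

/-- `A` is `ℒⁿ₊`-semipositive. -/
def Semipositive {n : ℕ} (A : Matrix (Fin (n + 1)) (Fin (n + 1)) ℝ) : Prop :=
  ∃ x ∈ interior (lorentzCone n), A.mulVec x ∈ interior (lorentzCone n)

/-- Self-duality of the Lorentz cone (one direction): the dot product of two
elements of the cone is nonnegative. -/
lemma lorentz_dot_nonneg {n : ℕ} {s y : Fin (n + 1) → ℝ}
    (hs : s ∈ lorentzCone n) (hy : y ∈ lorentzCone n) :
    0 ≤ ∑ j, s j * y j := by
  obtain ⟨hs0, hs1⟩ := hs
  obtain ⟨hy0, hy1⟩ := hy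
  rw [Fin.sum_univ_castSucc]
  have cs := Finset.sum_mul_sq_le_sq_mul_sq Finset.univ
    (fun i : Fin n => s i.castSucc) (fun i : Fin n => y i.castSucc)
  have h1 : (0:ℝ) ≤ ∑ i : Fin n, (s i.castSucc) ^ 2 :=
    Finset.sum_nonneg fun i _ => sq_nonneg _
  have h2 : (0:ℝ) ≤ ∑ i : Fin n, (y i.castSucc) ^ 2 :=
    Finset.sum_nonneg fun i _ => sq_nonneg _
  nlinarith [sq_nonneg (s (Fin.last n) * y (Fin.last n)
    + ∑ i : Fin n, s i.castSucc * y i.castSucc),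
    mul_nonneg hs0 hy0]

/-- Points satisfying the strict inequalities are in the interior of the cone. -/
lemma strict_mem_interior {n : ℕ} {x : Fin (n + 1) → ℝ}
    (h0 : 0 < x (Fin.last n))
    (h1 : ∑ i : Fin n, (x i.castSucc) ^ 2 < (x (Fin.last n)) ^ 2) :
    x ∈ interior (lorentzCone n) := by
  have hopen : IsOpen {x : Fin (n + 1) → ℝ |
      0 < x (Fin.last n) ∧ ∑ i : Fin n, (x i.castSucc) ^ 2 < (x (Fin.last n)) ^ 2} := by
    apply IsOpen.inter
    · exact isOpen_lt continuous_const (continuous_apply _)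
    · have c1 : Continuous fun x : Fin (n + 1) → ℝ => ∑ i : Fin n, (x i.castSucc) ^ 2 :=
        continuous_finset_sum _ fun i _ => (continuous_apply _).pow 2
      have c2 : Continuous fun x : Fin (n + 1) → ℝ => (x (Fin.last n)) ^ 2 :=
        (continuous_apply _).pow 2
      exact isOpen_lt c1 c2
  refine interior_maximal ?_ hopen ⟨h0, h1⟩
  exact fun z hz => ⟨hz.1.le, hz.2.le⟩

/-- If `s` is an element of the cone with positive last coordinate and `z` is
interior to the cone, then `s·z > 0`. -/
lemma lorentz_dot_pos {n : ℕ} {s z : Fin (n + 1) → ℝ}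
    (hs : s ∈ lorentzCone n) (hsn : 0 < s (Fin.last n))
    (hz : z ∈ interior (lorentzCone n)) :
    0 < ∑ j, s j * z j := by
  rw [mem_interior_iff_mem_nhds, Metric.mem_nhds_iff] at hz
  obtain ⟨ε, hε, hball⟩ := hz
  have hsnorm : (0:ℝ) ≤ ‖s‖ := norm_nonneg s
  set δ : ℝ := ε / (2 * (‖s‖ + 1)) with hδdef
  have hδ : 0 < δ := by positivity
  have hmem : z - δ • s ∈ lorentzCone n := by
    apply hball
    rw [Metric.mem_ball, dist_eq_norm]
    have h : z - δ • s - z = -(δ • s) := by abel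
    rw [h, norm_neg, norm_smul, Real.norm_eq_abs, abs_of_pos hδ]
    have h2 : δ * ‖s‖ < δ * (2 * (‖s‖ + 1)) := by nlinarith
    calc δ * ‖s‖ < δ * (2 * (‖s‖ + 1)) := h2
      _ = ε := by rw [hδdef, div_mul_cancel₀ _ (by positivity)]
  have hdot := lorentz_dot_nonneg hs hmem
  have hexp : ∑ j, s j * (z - δ • s) j = (∑ j, s j * z j) - δ * ∑ j, (s j) ^ 2 := by
    rw [Finset.mul_sum, ← Finset.sum_sub_distrib]
    apply Finset.sum_congr rfl
    intro j _
    simp only [Pi.sub_apply, Pi.smul_apply, smul_eq_mul]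
    ring
  rw [hexp] at hdot
  have hs2 : 0 < ∑ j, (s j) ^ 2 := by
    apply Finset.sum_pos' (fun j _ => sq_nonneg _)
    exact ⟨Fin.last n, Finset.mem_univ _, by positivity⟩
  nlinarith

theorem stmt_8 {n : ℕ} (A : Matrix (Fin (n + 1)) (Fin (n + 1)) ℝ)
    (hA : ¬ (∀ x ∈ lorentzCone n, A.mulVec x ∈ lorentzCone n)) :
    ∃ B : Matrix (Fin (n + 1)) (Fin (n + 1)) ℝ,
      Semipositive B ∧ ¬ Semipositive (A + B) := by
  push_neg at hA
  obtain ⟨x₀, hx₀, hv⟩ := hA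
  set v : Fin (n + 1) → ℝ := A.mulVec x₀ with hvdef
  -- construct a separating vector s in the cone with s·v < 0 and s_last > 0
  obtain ⟨s, hs, hsn, hsv⟩ :
      ∃ s : Fin (n + 1) → ℝ, s ∈ lorentzCone n ∧ 0 < s (Fin.last n) ∧
        ∑ j, s j * v j < 0 := by
    simp only [lorentzCone, Set.mem_setOf_eq, not_and_or, not_le] at hv
    rcases hv with hv | hv
    · refine ⟨Fin.snoc (fun _ : Fin n => (0:ℝ)) 1, ⟨?_, ?_⟩, ?_, ?_⟩
      · simp
      · simp
      · simp
      · rw [Fin.sum_univ_castSucc]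
        simp only [Fin.snoc_castSucc, Fin.snoc_last]
        simpa using hv
    · -- here ∑ v_i² > v_last²; take s_i = -v_i, s_last = √(∑ v_i²)
      set ρ : ℝ := Real.sqrt (∑ i : Fin n, (v i.castSucc) ^ 2) with hρdef
      have hρ0 : 0 ≤ ρ := Real.sqrt_nonneg _
      have hρsq : ρ ^ 2 = ∑ i : Fin n, (v i.castSucc) ^ 2 :=
        Real.sq_sqrt (Finset.sum_nonneg fun i _ => sq_nonneg _)
      have hρgt : (v (Fin.last n)) ^ 2 < ρ ^ 2 := by rw [hρsq]; exact hv
      have hρpos : 0 < ρ := by nlinarith [sq_nonneg (v (Fin.last n))]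
      have hvlt : v (Fin.last n) < ρ := by nlinarith [abs_nonneg (v (Fin.last n))]
      refine ⟨Fin.snoc (fun i => -(v i.castSucc)) ρ, ⟨?_, ?_⟩, ?_, ?_⟩
      · simpa using hρ0
      · simp only [Fin.snoc_castSucc, Fin.snoc_last]
        rw [hρsq]
        apply le_of_eq
        apply Finset.sum_congr rfl
        intro i _; ring
      · simpa using hρpos
      · rw [Fin.sum_univ_castSucc]
        simp only [Fin.snoc_castSucc, Fin.snoc_last]
        have h3 : ∑ i : Fin n, -(v i.castSucc) * v i.castSucc = -ρ ^ 2 := by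
          rw [hρsq, ← Finset.sum_neg_distrib]
          apply Finset.sum_congr rfl
          intro i _; ring
        rw [h3]
        nlinarith
  -- perturb x₀ to an interior point x₁ with s·(A x₁) < 0
  set e : Fin (n + 1) → ℝ := Fin.snoc (fun _ : Fin n => (0:ℝ)) 1 with hedef
  set a : ℝ := ∑ j, s j * A.mulVec e j with hadef
  set d : ℝ := -∑ j, s j * v j with hddef
  have hd : 0 < d := by simp only [hddef]; linarith
  set ε : ℝ := d / (2 * (|a| + 1)) with hεdef
  have hε : 0 < ε := by positivity
  set x₁ : Fin (n + 1) → ℝ := x₀ + ε • e with hx₁def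
  have hx₁cast : ∀ i : Fin n, x₁ i.castSucc = x₀ i.castSucc := by
    intro i
    simp [hx₁def, hedef]
  have hx₁last : x₁ (Fin.last n) = x₀ (Fin.last n) + ε := by
    simp [hx₁def, hedef]
  have hx₁int : x₁ ∈ interior (lorentzCone n) := by
    apply strict_mem_interior
    · rw [hx₁last]; linarith [hx₀.1]
    · rw [hx₁last]
      calc ∑ i : Fin n, (x₁ i.castSucc) ^ 2 = ∑ i : Fin n, (x₀ i.castSucc) ^ 2 := by
            apply Finset.sum_congr rfl; intro i _; rw [hx₁cast]
        _ ≤ (x₀ (Fin.last n)) ^ 2 := hx₀.2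
        _ < (x₀ (Fin.last n) + ε) ^ 2 := by nlinarith [hx₀.1]
  have hAx₁ : A.mulVec x₁ = v + ε • A.mulVec e := by
    rw [hx₁def, Matrix.mulVec_add, Matrix.mulVec_smul, hvdef]
  have hsAx₁ : ∑ j, s j * A.mulVec x₁ j < 0 := by
    have hsplit : ∑ j, s j * A.mulVec x₁ j = (∑ j, s j * v j) + ε * a := by
      rw [hAx₁, hadef, Finset.mul_sum, ← Finset.sum_add_distrib]
      apply Finset.sum_congr rfl
      intro j _
      simp only [Pi.add_apply, Pi.smul_apply, smul_eq_mul]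
      ring
    rw [hsplit]
    have h1 : ε * a ≤ ε * |a| :=
      mul_le_mul_of_nonneg_left (le_abs_self a) hε.le
    have h2 : ε * |a| < d / 2 := by
      rw [hεdef, div_mul_eq_mul_div, div_lt_div_iff₀ (by positivity) (by norm_num : (0:ℝ) < 2)]
      nlinarith [abs_nonneg a]
    have h3 : ∑ j, s j * v j = -d := by simp [hddef]
    rw [h3]
    linarith
  -- define B
  set sN : ℝ := s (Fin.last n) with hsNdef
  set t : Fin (n + 1) → ℝ := fun j => ∑ k, s k * A k j with htdef
  set B : Matrix (Fin (n + 1)) (Fin (n + 1)) ℝ :=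
    Matrix.of (fun i j => if i = Fin.last n then -(t j) / sN else 0) with hBdef
  have key : ∀ x : Fin (n + 1) → ℝ, ∑ j, t j * x j = ∑ k, s k * A.mulVec x k := by
    intro x
    simp only [htdef, Matrix.mulVec, dotProduct, Finset.sum_mul, Finset.mul_sum]
    rw [Finset.sum_comm]
    apply Finset.sum_congr rfl; intro j _
    apply Finset.sum_congr rfl; intro k _
    ring
  have hBmul : ∀ x : Fin (n + 1) → ℝ, ∀ i,
      B.mulVec x i = if i = Fin.last n then -(∑ k, s k * A.mulVec x k) / sN else 0 := by
    intro x i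
    have hdef : B.mulVec x i = ∑ j, B i j * x j := rfl
    by_cases hi : i = Fin.last n
    · rw [hdef, if_pos hi]
      calc ∑ j, B i j * x j = ∑ j, -(t j * x j) / sN := by
            apply Finset.sum_congr rfl; intro j _
            rw [hBdef]
            simp only [Matrix.of_apply, hi, if_true]
            ring
        _ = (∑ j, -(t j * x j)) / sN := by rw [Finset.sum_div]
        _ = -(∑ j, t j * x j) / sN := by rw [← Finset.sum_neg_distrib]
        _ = -(∑ k, s k * A.mulVec x k) / sN := by rw [key]
    · rw [hdef, if_neg hi]
      apply Finset.sum_eq_zero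
      intro j _
      rw [hBdef]
      simp [hi]
  refine ⟨B, ⟨x₁, hx₁int, ?_⟩, ?_⟩
  · -- B x₁ is interior
    set c : ℝ := -(∑ k, s k * A.mulVec x₁ k) / sN with hcdef
    have hc : 0 < c := by
      rw [hcdef]
      apply div_pos (by linarith) hsn
    apply strict_mem_interior
    · rw [hBmul x₁ (Fin.last n), if_pos rfl, ← hcdef]; exact hc
    · have hlast : B.mulVec x₁ (Fin.last n) = c := by
        rw [hBmul x₁ (Fin.last n), if_pos rfl, ← hcdef]
      have hcast : ∀ i : Fin n, B.mulVec x₁ i.castSucc = 0 := by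
        intro i
        rw [hBmul, if_neg (Fin.castSucc_lt_last i).ne]
      rw [hlast]
      calc ∑ i : Fin n, (B.mulVec x₁ i.castSucc) ^ 2 = 0 := by
            apply Finset.sum_eq_zero; intro i _; rw [hcast]; ring
        _ < c ^ 2 := by positivity
  · -- A + B is not semipositive
    rintro ⟨y, hy, hz⟩
    have hzero : ∑ j, s j * (A + B).mulVec y j = 0 := by
      rw [Matrix.add_mulVec]
      have hsplit : ∑ j, s j * (A.mulVec y + B.mulVec y) j
          = (∑ j, s j * A.mulVec y j) + ∑ j, s j * B.mulVec y j := by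
        rw [← Finset.sum_add_distrib]
        apply Finset.sum_congr rfl; intro j _
        simp only [Pi.add_apply]; ring
      rw [hsplit]
      have hB : ∑ j, s j * B.mulVec y j = -(∑ k, s k * A.mulVec y k) := by
        rw [Finset.sum_eq_single (Fin.last n)]
        · rw [hBmul, if_pos rfl, ← hsNdef]
          field_simp
        · intro j _ hj
          rw [hBmul, if_neg hj, mul_zero]
        · simp
      rw [hB]; ring
    have hpos := lorentz_dot_pos hs hsn hz
    rw [hzero] at hpos
    exact lt_irrefl 0 hpos
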